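/- If p and q are relatively prime positive integers with p > q and both p and q are odd, then p/q has no even continued fraction expansion, i.e., there is no sequence of nonzero even integers b_1,...,b_m with [b_1,...,b_m] = p/q. -/

import Mathlib

def cfQ : List ℚ → ℚ
  | [] => 0
  | [a] => a
  | a :: b :: l => a + 1 / cfQ (b :: l)

lemma key (a : ℤ) (ha : Even a) (r : ℚ) (hr : r ≠ 0)
    (h : (2:ℤ) ∣ r.num * (r.den : ℤ)) :
    (2:ℤ) ∣ ((a:ℚ) + 1/r).num * (((a:ℚ) + 1/r).den : ℤ) := by
  set n := r.num with hn
  set d := (r.den : ℤ) with hd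
  have hn0 : n ≠ 0 := Rat.num_ne_zero.mpr hr
  have hgcd : Int.gcd n d = 1 := r.reduced
  have hval : (a:ℚ) + 1/r = Rat.divInt (a*n + d) n := by
    rw [one_div, Rat.inv_def]
    rw [show (a:ℚ) = Rat.divInt a 1 from by simp [Rat.divInt_one]]
    rw [Rat.divInt_add_divInt _ _ one_ne_zero hn0]
    ring_nf
    rfl
  have hcop : IsCoprime (a*n + d) n := by
    have h1 : IsCoprime d n := by
      rw [Int.isCoprime_iff_gcd_eq_one, Int.gcd_comm]; exact hgcd
    have := h1.add_mul_left_left a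
    rwa [add_comm, mul_comm] at this
  have hg2 : (a*n + d).gcd n = 1 := Int.isCoprime_iff_gcd_eq_one.mp hcop
  have hnum : ((a:ℚ) + 1/r).num = n.sign * (a*n + d) := by
    rw [hval, Rat.num_divInt, Int.gcd_comm, hg2]; simp
  have hden : (((a:ℚ) + 1/r).den : ℤ) = (n.natAbs : ℤ) := by
    rw [hval, Rat.den_divInt, if_neg hn0, Int.gcd_comm, hg2]; simp
  rw [hnum, hden]
  have : n.sign * (a*n + d) * (n.natAbs : ℤ) = (a*n + d) * n := by
    rw [mul_comm (n.sign) _, mul_assoc, Int.sign_mul_natAbs]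
  rw [this]
  obtain ⟨k, hk⟩ := ha
  obtain ⟨m, hm⟩ := h
  exact ⟨k*n*n + m, by rw [hk]; rw [hn, hd] at hm ⊢; nlinarith⟩

lemma cf_even : ∀ b : List ℤ, b ≠ [] → (∀ x ∈ b, Even x) →
    (∀ t : List ℤ, t ≠ [] → t <:+ b → cfQ (t.map (fun x => (x : ℚ))) ≠ 0) →
    (2:ℤ) ∣ (cfQ (b.map (fun x => (x : ℚ)))).num *
      ((cfQ (b.map (fun x => (x : ℚ)))).den : ℤ)
  | [], hne, _, _ => absurd rfl hne
  | [a], _, hev, _ => by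
      show (2:ℤ) ∣ ((a:ℚ)).num * (((a:ℚ)).den : ℤ)
      simp only [Rat.num_intCast, Rat.den_intCast, Int.natCast_one, mul_one]
      exact (hev a (by simp)).two_dvd
  | a :: c :: l, _, hev, hsuf => by
      have ih := cf_even (c :: l) (by simp)
        (fun x hx => hev x (List.mem_cons_of_mem a hx))
        (fun t ht hts => hsuf t ht (hts.trans (List.suffix_cons a (c :: l))))
      have hr : cfQ ((c :: l).map (fun x => (x : ℚ))) ≠ 0 :=
        hsuf (c :: l) (by simp) (List.suffix_cons a (c :: l))
      have : cfQ ((a :: c :: l).map (fun x => (x : ℚ))) =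
          (a:ℚ) + 1 / cfQ ((c :: l).map (fun x => (x : ℚ))) := rfl
      rw [this]
      exact key a (hev a (by simp)) _ hr ih

theorem stmt12 (p q : ℕ) (hq : 0 < q) (hpq : q < p) (hcop : Nat.Coprime p q)
    (hp : Odd p) (hq' : Odd q) :
    ¬ ∃ b : List ℤ, b ≠ [] ∧ (∀ x ∈ b, x ≠ 0 ∧ Even x) ∧
      (∀ t : List ℤ, t ≠ [] → t <:+ b → cfQ (t.map (fun x => (x : ℚ))) ≠ 0) ∧
      cfQ (b.map (fun x => (x : ℚ))) = (p : ℚ) / (q : ℚ) := by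
  rintro ⟨b, hne, hx, hsuf, hval⟩
  have hdvd := cf_even b hne (fun x hx' => (hx x hx').2) hsuf
  rw [hval] at hdvd
  have hq0 : ((q:ℤ)) ≠ 0 := by exact_mod_cast hq.ne'
  have hdq : (p:ℚ) / (q:ℚ) = Rat.divInt (p:ℤ) (q:ℤ) := by
    rw [Rat.divInt_eq_div]; push_cast; ring
  have hg : Int.gcd (p:ℤ) (q:ℤ) = 1 := by
    simpa [Int.gcd_natCast_natCast] using hcop
  have hnum : ((p:ℚ)/(q:ℚ)).num = (p:ℤ) := by
    rw [hdq, Rat.num_divInt, Int.gcd_comm, hg]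
    simp [Int.sign_natCast_of_ne_zero hq.ne']
  have hden : (((p:ℚ)/(q:ℚ)).den : ℤ) = (q:ℤ) := by
    rw [hdq, Rat.den_divInt, if_neg hq0, Int.gcd_comm, hg]; simp
  rw [hnum, hden] at hdvd
  have : Odd ((p:ℤ) * (q:ℤ)) := by
    exact (Int.odd_coe_nat p).mpr hp |>.mul ((Int.odd_coe_nat q).mpr hq')
  exact (Int.not_odd_iff_even.mpr (even_iff_two_dvd.mpr hdvd)) this
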